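/- Let n ≥ 1 and let X, Y, X', Y' be objects of D(𝒜) concentrated in [-n+1, 0]. Suppose there is a distinguished triangle X →u Y ⊕ X' →v Y' → X⟦1⟧ in which the two components of u are f : X → Y and a : X → X', and the two components of v are -b : Y → Y' and f' : X' → Y' (so that the square with sides f, a, b, f' is a homotopy pushout square). If H^{-n+1}(f) is a monomorphism in 𝒜, then H^{-n+1}(f') is a monomorphism in 𝒜. -/

import Mathlib

open CategoryTheory CategoryTheory.Limits CategoryTheory.Pretriangulated

universe w v u

variable {𝒜 : Type u} [Category.{v} 𝒜] [Abelian 𝒜] [HasDerivedCategory.{w} 𝒜]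

/-- An object of the derived category is concentrated in degrees `[-n+1, 0]` if its
homology vanishes in degrees `< -n+1` and `> 0`. -/
def Concentrated (n : ℤ) (X : DerivedCategory 𝒜) : Prop :=
  ∀ i : ℤ, (i < -n + 1 ∨ 0 < i) → IsZero ((DerivedCategory.homologyFunctor 𝒜 i).obj X)

theorem stmt_6 (n : ℤ) (hn : 1 ≤ n) (X Y X' Y' : DerivedCategory 𝒜)
    (hX : Concentrated n X) (hY : Concentrated n Y)
    (hX' : Concentrated n X') (hY' : Concentrated n Y')
    (f : X ⟶ Y) (a : X ⟶ X') (b : Y ⟶ Y') (f' : X' ⟶ Y')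
    (u : X ⟶ Y ⊞ X') (v : Y ⊞ X' ⟶ Y') (w : Y' ⟶ X⟦(1 : ℤ)⟧)
    (hu₁ : u ≫ biprod.fst = f) (hu₂ : u ≫ biprod.snd = a)
    (hv₁ : biprod.inl ≫ v = -b) (hv₂ : biprod.inr ≫ v = f')
    (hT : Triangle.mk u v w ∈ distTriang (DerivedCategory 𝒜))
    (hf : Mono ((DerivedCategory.homologyFunctor 𝒜 (-n + 1)).map f)) :
    Mono ((DerivedCategory.homologyFunctor 𝒜 (-n + 1)).map f') := by
  have hmono_u : Mono ((DerivedCategory.homologyFunctor 𝒜 (-n + 1)).map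
      (Triangle.mk u v w).mor₁) := by
    rw [DerivedCategory.HomologySequence.mono_homologyMap_mor₁_iff _ hT (-n) (-n + 1) rfl]
    apply (hY' (-n) (Or.inl (by omega))).eq_of_src
  haveI := hmono_u
  have hex := DerivedCategory.HomologySequence.exact₂ (Triangle.mk u v w) hT (-n + 1)
  rw [Preadditive.mono_iff_cancel_zero]
  intro Z t ht
  have hs : (t ≫ (DerivedCategory.homologyFunctor 𝒜 (-n + 1)).map
      (biprod.inr : X' ⟶ Y ⊞ X')) ≫ (DerivedCategory.homologyFunctor 𝒜 (-n + 1)).map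
      (Triangle.mk u v w).mor₂ = 0 := by
    dsimp only [Triangle.mk]
    rw [Category.assoc, ← Functor.map_comp, hv₂, ht]
    rfl
  obtain ⟨χ, hχ⟩ := hex.lift' _ hs
  have hu : (Triangle.mk u v w).mor₁ = u := rfl
  have hχ0 : χ = 0 := by
    have hmf := hf
    refine (cancel_mono ((DerivedCategory.homologyFunctor 𝒜 (-n + 1)).map f)).1 ?_
    have h1 : χ ≫ (DerivedCategory.homologyFunctor 𝒜 (-n + 1)).map u = t ≫ (DerivedCategory.homologyFunctor 𝒜 (-n + 1)).map biprod.inr := hχ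
    have e : χ ≫ ((DerivedCategory.homologyFunctor 𝒜 (-n + 1)).map u ≫
        (DerivedCategory.homologyFunctor 𝒜 (-n + 1)).map biprod.fst) = 0 := by
      rw [← Category.assoc, h1, Category.assoc, ← Functor.map_comp]
      simp
    have e2 : (DerivedCategory.homologyFunctor 𝒜 (-n + 1)).map u ≫
        (DerivedCategory.homologyFunctor 𝒜 (-n + 1)).map biprod.fst =
        (DerivedCategory.homologyFunctor 𝒜 (-n + 1)).map f := by
      rw [← Functor.map_comp, hu₁]
    exact ((congrArg (fun g => χ ≫ g) e2).symm.trans e).trans zero_comp.symm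
  have hinr : Mono ((DerivedCategory.homologyFunctor 𝒜 (-n + 1)).map
      (biprod.inr : X' ⟶ Y ⊞ X')) := inferInstance
  rw [← cancel_mono ((DerivedCategory.homologyFunctor 𝒜 (-n + 1)).map
      (biprod.inr : X' ⟶ Y ⊞ X')), ← hχ, hχ0, zero_comp, zero_comp]
  rfl
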